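/- Let n ≥ 1. The set { φ ∈ [−π/2, π/2] : A_n(iφ) = 0 } is finite. -/

import Mathlib

open MeasureTheory Topology Filter Set

noncomputable section

/-- `sinh(ζ)/ζ`, extended by `1` at `ζ = 0`. -/
def sinhc (z : ℂ) : ℂ := if z = 0 then 1 else Complex.sinh z / z

/-- `A_n(w) = ∫_ℝ (sinh(λ+w)/(λ+w))^{1/2} cosh(λ+w) (cosh λ)^{−n−3/2} dλ`
(principal branch powers). -/
def An (n : ℕ) (w : ℂ) : ℂ :=
  ∫ l : ℝ, sinhc (l + w) ^ ((1 : ℂ) / 2) * Complex.cosh (l + w) *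
    Complex.cosh (l : ℂ) ^ (-(n : ℂ) - 3 / 2)

/-- `B_n(w) = ∫_ℝ (λ+w)(sinh(λ+w)/(λ+w))^{3/2} (cosh λ)^{−n−3/2} dλ`
(principal branch powers). -/
def Bn (n : ℕ) (w : ℂ) : ℂ :=
  ∫ l : ℝ, ((l : ℂ) + w) * sinhc (l + w) ^ ((3 : ℂ) / 2) *
    Complex.cosh (l : ℂ) ^ (-(n : ℂ) - 3 / 2)

/-- `sinh λ / λ` for real `λ`, extended by `1` at `λ = 0`. -/
def shc (l : ℝ) : ℝ := if l = 0 then 1 else Real.sinh l / l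


namespace Aux14



lemma tendsto_sinh_div :
    Tendsto (fun z : ℂ => Complex.sinh z / z) (𝓝[≠] (0:ℂ)) (𝓝 1) := by
  have h := Complex.hasDerivAt_sinh 0
  rw [hasDerivAt_iff_tendsto_slope] at h
  simp only [Complex.cosh_zero] at h
  refine h.congr' ?_
  filter_upwards [self_mem_nhdsWithin] with z hz
  simp [slope_def_field, Complex.sinh_zero]

lemma differentiable_sinhc : Differentiable ℂ sinhc := by
  have hlim : limUnder (𝓝[≠] (0:ℂ)) (fun z : ℂ => Complex.sinh z / z) = 1 :=
    tendsto_sinh_div.limUnder_eq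
  have hupd : sinhc = Function.update (fun z : ℂ => Complex.sinh z / z) 0
      (limUnder (𝓝[≠] (0:ℂ)) (fun z : ℂ => Complex.sinh z / z)) := by
    funext z
    rw [Function.update_apply, hlim]
    rfl
  rw [← differentiableOn_univ, hupd]
  apply Complex.differentiableOn_update_limUnder_of_isLittleO univ_mem
  · intro z hz
    have hz0 : z ≠ 0 := by simpa using hz.2
    exact ((Complex.differentiable_sinh z).div differentiableAt_id hz0).differentiableWithinAt
  · have hb : Filter.IsBoundedUnder (· ≤ ·) (𝓝[≠] (0:ℂ))
        (norm ∘ fun z : ℂ => Complex.sinh z / z) :=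
      tendsto_sinh_div.norm.isBoundedUnder_le
    simpa [Complex.sinh_zero] using hb.isLittleO_sub_self_inv

lemma continuous_sinhc : Continuous sinhc := differentiable_sinhc.continuous



lemma sinh_decomp (z : ℂ) :
    Complex.sinh z = (Real.sinh z.re * Real.cos z.im : ℝ) +
      (Real.cosh z.re * Real.sin z.im : ℝ) * Complex.I := by
  conv_lhs => rw [← Complex.re_add_im z]
  rw [Complex.sinh_add, Complex.sinh_mul_I, Complex.cosh_mul_I]
  push_cast
  ring

lemma cosh_decomp (z : ℂ) :
    Complex.cosh z = (Real.cosh z.re * Real.cos z.im : ℝ) +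
      (Real.sinh z.re * Real.sin z.im : ℝ) * Complex.I := by
  conv_lhs => rw [← Complex.re_add_im z]
  rw [Complex.cosh_add, Complex.sinh_mul_I, Complex.cosh_mul_I]
  push_cast
  ring

lemma sinh_re' (z : ℂ) : (Complex.sinh z).re = Real.sinh z.re * Real.cos z.im := by
  rw [sinh_decomp z]
  simp only [Complex.add_re, Complex.ofReal_re, Complex.mul_re, Complex.I_re, Complex.I_im,
    Complex.ofReal_im]
  ring

lemma sinh_im' (z : ℂ) : (Complex.sinh z).im = Real.cosh z.re * Real.sin z.im := by
  rw [sinh_decomp z]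
  simp only [Complex.add_im, Complex.ofReal_im, Complex.mul_im, Complex.I_re, Complex.I_im,
    Complex.ofReal_re]
  ring

lemma norm_sinh_le (z : ℂ) : ‖Complex.sinh z‖ ≤ Real.cosh z.re := by
  rw [Complex.norm_def, sinh_decomp z, Complex.normSq_add_mul_I]
  have h2 : Real.cosh z.re ^ 2 = Real.sinh z.re ^ 2 + 1 := Real.cosh_sq _
  have h3 : (Real.sinh z.re * Real.cos z.im) ^ 2 + (Real.cosh z.re * Real.sin z.im) ^ 2
      ≤ Real.cosh z.re ^ 2 := by nlinarith [Real.sin_sq_le_one z.im, Real.cos_sq_le_one z.im, Real.sin_sq_add_cos_sq z.im]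
  have h4 := Real.sqrt_le_sqrt h3
  rwa [Real.sqrt_sq (Real.cosh_pos _).le] at h4

lemma norm_cosh_le (z : ℂ) : ‖Complex.cosh z‖ ≤ Real.cosh z.re := by
  rw [Complex.norm_def, cosh_decomp z, Complex.normSq_add_mul_I]
  have h2 : Real.cosh z.re ^ 2 = Real.sinh z.re ^ 2 + 1 := Real.cosh_sq _
  have h3 : (Real.cosh z.re * Real.cos z.im) ^ 2 + (Real.sinh z.re * Real.sin z.im) ^ 2
      ≤ Real.cosh z.re ^ 2 := by nlinarith [Real.sin_sq_le_one z.im, Real.cos_sq_le_one z.im, Real.sin_sq_add_cos_sq z.im]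
  have h4 := Real.sqrt_le_sqrt h3
  rwa [Real.sqrt_sq (Real.cosh_pos _).le] at h4

lemma self_mul_sinh_nonneg (x : ℝ) : 0 ≤ x * Real.sinh x := by
  rcases le_or_gt 0 x with h | h
  · have hs : 0 ≤ Real.sinh x := by rw [← Real.sinh_zero]; exact Real.sinh_le_sinh.2 h
    exact mul_nonneg h hs
  · have hs : Real.sinh x ≤ 0 := by rw [← Real.sinh_zero]; exact Real.sinh_le_sinh.2 h.le
    nlinarith

lemma self_mul_sinh_pos {x : ℝ} (hx : x ≠ 0) : 0 < x * Real.sinh x := by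
  rcases lt_or_gt_of_ne hx with h | h
  · have hs : Real.sinh x < 0 := by rw [← Real.sinh_zero]; exact Real.sinh_lt_sinh.2 h
    nlinarith
  · have hs : 0 < Real.sinh x := by rw [← Real.sinh_zero]; exact Real.sinh_lt_sinh.2 h
    nlinarith

lemma mul_sin_nonneg {y : ℝ} (h : |y| ≤ Real.pi) : 0 ≤ y * Real.sin y := by
  rcases le_or_gt 0 y with hy | hy
  · exact mul_nonneg hy (Real.sin_nonneg_of_nonneg_of_le_pi hy (by rwa [abs_of_nonneg hy] at h))
  · have h2 : 0 ≤ Real.sin (-y) := Real.sin_nonneg_of_nonneg_of_le_pi (by linarith)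
      (by rwa [abs_of_neg hy] at h)
    rw [Real.sin_neg] at h2
    nlinarith

lemma mul_sin_pos {y : ℝ} (hy : y ≠ 0) (h : |y| < Real.pi) : 0 < y * Real.sin y := by
  rcases lt_or_gt_of_ne hy with h1 | h1
  · have h2 : 0 < Real.sin (-y) := Real.sin_pos_of_pos_of_lt_pi (by linarith)
      (by rwa [abs_of_neg h1] at h)
    rw [Real.sin_neg] at h2
    nlinarith
  · have h2 : 0 < Real.sin y := Real.sin_pos_of_pos_of_lt_pi h1 (by rwa [abs_of_pos h1] at h)
    nlinarith

lemma abs_sin_le_abs (t : ℝ) : |Real.sin t| ≤ |t| := by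
  have key : ∀ u : ℝ, 0 ≤ u → |Real.sin u| ≤ u := by
    intro u hu
    rw [abs_le]
    refine ⟨?_, Real.sin_le hu⟩
    rcases le_or_gt u 1 with h | h
    · have : 0 ≤ Real.sin u := Real.sin_nonneg_of_nonneg_of_le_pi hu
        (by linarith [Real.pi_gt_three])
      linarith
    · linarith [Real.neg_one_le_sin u]
  rcases le_or_gt 0 t with h | h
  · rw [abs_of_nonneg h]; exact key t h
  · rw [abs_of_neg h]
    have := key (-t) (by linarith)
    rwa [Real.sin_neg, abs_neg] at this

lemma sinh_le_mul_cosh {t : ℝ} (ht : 0 ≤ t) : Real.sinh t ≤ t * Real.cosh t := by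
  have hder : ∀ u : ℝ, HasDerivAt (fun v : ℝ => v * Real.cosh v - Real.sinh v)
      (u * Real.sinh u) u := by
    intro u
    have h1 := (hasDerivAt_id u).mul (Real.hasDerivAt_cosh u)
    have h2 := Real.hasDerivAt_sinh u
    have h3 := h1.sub h2
    simp only [id_eq, one_mul] at h3
    exact h3.congr_deriv (by ring)
  have hmono : MonotoneOn (fun v : ℝ => v * Real.cosh v - Real.sinh v) (Set.Ici 0) := by
    apply monotoneOn_of_deriv_nonneg (convex_Ici 0)
    · exact ((continuous_id.mul Real.continuous_cosh).sub Real.continuous_sinh).continuousOn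
    · intro u _
      exact ((hder u).differentiableAt).differentiableWithinAt
    · intro u hu
      rw [(hder u).deriv]
      rw [interior_Ici] at hu
      exact (self_mul_sinh_pos (ne_of_gt hu)).le
  have h0 := hmono Set.self_mem_Ici (Set.mem_Ici.2 ht) ht
  simp only [zero_mul, Real.sinh_zero, sub_zero, zero_sub] at h0
  linarith


lemma abs_sin_eq_sin_abs {y : ℝ} (h : |y| ≤ Real.pi) : |Real.sin y| = Real.sin |y| := by
  rcases le_or_gt 0 y with h' | h'
  · rw [abs_of_nonneg h'] at h ⊢
    rw [abs_of_nonneg (Real.sin_nonneg_of_nonneg_of_le_pi h' h)]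
  · have hneg : 0 ≤ Real.sin (-y) := by
      apply Real.sin_nonneg_of_nonneg_of_le_pi (by linarith)
      rw [abs_of_neg h'] at h; linarith
    rw [Real.sin_neg] at hneg
    rw [abs_of_nonpos (by linarith), abs_of_neg h', Real.sin_neg]

lemma sinhc_mem_slitPlane {z : ℂ} (hz : |z.im| < Real.pi / 2 + 1 / 4) :
    sinhc z ∈ Complex.slitPlane := by
  rw [Complex.mem_slitPlane_iff]
  by_cases h0 : z = 0
  · left; subst h0; simp [sinhc]
  have hz0 : sinhc z = Complex.sinh z / z := if_neg h0
  have hnsq : 0 < Complex.normSq z := Complex.normSq_pos.2 h0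
  have hre : (sinhc z).re = (Real.sinh z.re * Real.cos z.im * z.re +
      Real.cosh z.re * Real.sin z.im * z.im) / Complex.normSq z := by
    rw [hz0, Complex.div_re, sinh_re', sinh_im', ← add_div]
  have him : (sinhc z).im = (Real.cosh z.re * Real.sin z.im * z.re -
      Real.sinh z.re * Real.cos z.im * z.im) / Complex.normSq z := by
    rw [hz0, Complex.div_im, sinh_im', sinh_re', div_sub_div_same]
  set x := z.re with hx'
  set y := z.im with hy'
  rcases le_or_gt |y| (Real.pi / 2) with hy | hy
  · -- strip case: real part positive
    left
    rw [hre]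
    apply div_pos ?_ hnsq
    have hcos : 0 ≤ Real.cos y :=
      Real.cos_nonneg_of_mem_Icc ⟨(abs_le.1 hy).1, (abs_le.1 hy).2⟩
    have h1 : 0 ≤ Real.sinh x * Real.cos y * x := by
      have := self_mul_sinh_nonneg x; nlinarith
    by_cases hyy : y = 0
    · have hxx : x ≠ 0 := by
        intro hxx
        exact h0 (Complex.ext (by simpa [← hx'] using hxx) (by simpa [← hy'] using hyy))
      have h2 : 0 < Real.sinh x * Real.cos y * x := by
        rw [hyy, Real.cos_zero]
        have := self_mul_sinh_pos hxx; nlinarith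
      have h3 : Real.cosh x * Real.sin y * y = 0 := by rw [hyy]; ring
      linarith
    · have h2 : 0 < Real.cosh x * Real.sin y * y := by
        have hys := mul_sin_pos hyy (lt_of_le_of_lt hy (by linarith [Real.pi_gt_three]))
        nlinarith [Real.cosh_pos x]
      linarith
  · -- near-endpoint case
    have hyne : y ≠ 0 := by
      intro h; rw [h] at hy; simp at hy; linarith [Real.pi_pos]
    have hypi : |y| < Real.pi := lt_trans hz (by linarith [Real.pi_gt_three])
    by_cases hxx : x = 0
    · left
      rw [hre, hxx]
      simp only [Real.sinh_zero, Real.cosh_zero, zero_mul, mul_zero, zero_add, one_mul]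
      apply div_pos ?_ hnsq
      have := mul_sin_pos hyne hypi
      nlinarith
    · right
      rw [him]
      apply div_ne_zero ?_ (ne_of_gt hnsq)
      have hsin : (31 : ℝ) / 32 ≤ |Real.sin y| := by
        rw [abs_sin_eq_sin_abs hypi.le, ← Real.cos_pi_div_two_sub]
        have hb := Real.one_sub_sq_div_two_le_cos (x := Real.pi / 2 - |y|)
        have ht2 : (Real.pi / 2 - |y|) ^ 2 ≤ (1 / 4 : ℝ) ^ 2 := by nlinarith
        nlinarith
      have hcos : |Real.cos y| ≤ 1 / 4 := by
        calc |Real.cos y| = |Real.sin (Real.pi / 2 - |y|)| := by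
              rw [Real.sin_pi_div_two_sub, Real.cos_abs]
          _ ≤ abs (Real.pi / 2 - |y|) := abs_sin_le_abs _
          _ ≤ 1 / 4 := abs_le.2 ⟨by linarith, by linarith⟩
      intro heq
      have heq' : Real.cosh x * Real.sin y * x = Real.sinh x * Real.cos y * y := by linarith
      have habs : |Real.cosh x * Real.sin y * x| = |Real.sinh x * Real.cos y * y| := by
        rw [heq']
      rw [abs_mul, abs_mul, abs_mul, abs_mul] at habs
      have hsinh : |Real.sinh x| ≤ |x| * Real.cosh x := by
        rw [Real.abs_sinh]
        have := sinh_le_mul_cosh (abs_nonneg x)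
        rwa [Real.cosh_abs] at this
      have hxpos : 0 < |x| := abs_pos.2 hxx
      have hcoshx : |Real.cosh x| = Real.cosh x := abs_of_pos (Real.cosh_pos x)
      rw [hcoshx] at habs
      have hypb : |y| ≤ Real.pi / 2 + 1 / 4 := hz.le
      have hpi : Real.pi < 3.15 := Real.pi_lt_d2
      have hP : 0 < Real.cosh x * |x| := mul_pos (Real.cosh_pos x) hxpos
      have hL : Real.cosh x * (31 / 32) * |x| ≤ Real.cosh x * |Real.sin y| * |x| := by
        have := Real.cosh_pos x
        have := abs_nonneg x
        nlinarith
      have hR1 : |Real.sinh x| * |Real.cos y| ≤ |x| * Real.cosh x * (1 / 4) :=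
        mul_le_mul hsinh hcos (abs_nonneg _)
          (mul_nonneg (abs_nonneg x) (Real.cosh_pos x).le)
      have hR : |Real.sinh x| * |Real.cos y| * |y| ≤
          |x| * Real.cosh x * (1 / 4) * (Real.pi / 2 + 1 / 4) :=
        mul_le_mul hR1 hypb (abs_nonneg y)
          (by positivity)
      nlinarith [hP]

/-- the analytic core `G(z) = sinhc(z)^{1/2} · cosh(z)`. -/
def Gfun : ℂ → ℂ := fun z => sinhc z ^ ((1 : ℂ) / 2) * Complex.cosh z

lemma cosh_shift (a b : ℝ) : Real.cosh (a + b) ≤ Real.cosh a * Real.exp |b| := by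
  rw [Real.cosh_add]
  have h1 : Real.sinh a * Real.sinh b ≤ Real.cosh a * |Real.sinh b| := by
    calc Real.sinh a * Real.sinh b ≤ |Real.sinh a * Real.sinh b| := le_abs_self _
      _ = |Real.sinh a| * |Real.sinh b| := abs_mul _ _
      _ ≤ Real.cosh a * |Real.sinh b| := by
          have h2 : |Real.sinh a| ≤ Real.cosh a := by
            rw [Real.abs_sinh, ← Real.cosh_abs]
            nlinarith [Real.sinh_lt_cosh |a|, Real.cosh_abs a]
          have := abs_nonneg (Real.sinh b)
          nlinarith
  have h3 : Real.cosh b + |Real.sinh b| = Real.exp |b| := by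
    rw [← Real.cosh_abs, Real.abs_sinh, Real.cosh_add_sinh]
  nlinarith [Real.cosh_pos a]

lemma G_diffAt {z : ℂ} (hz : |z.im| < Real.pi / 2 + 1 / 4) : DifferentiableAt ℂ Gfun z :=
  (((differentiable_sinhc z).cpow (differentiableAt_const _)
    (sinhc_mem_slitPlane hz))).mul (Complex.differentiable_cosh z)

lemma exists_G_bound : ∃ M : ℝ, 0 < M ∧
    ∀ z : ℂ, ‖Gfun z‖ ≤ M * Real.cosh z.re ^ ((3 : ℝ) / 2) := by
  obtain ⟨C, hC⟩ : ∃ C, ∀ z ∈ Metric.closedBall (0 : ℂ) 1, ‖sinhc z‖ ≤ C :=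
    (isCompact_closedBall (0 : ℂ) 1).exists_bound_of_continuousOn
      continuous_sinhc.continuousOn
  set C1 : ℝ := max C 0 with hC1
  have habs : ∀ z : ℂ, ‖sinhc z‖ ≤ C1 + Real.cosh z.re := by
    intro z
    rcases le_or_gt ‖z‖ 1 with h | h
    · have h1 := hC z (by simpa [Metric.mem_closedBall, Complex.dist_eq] using h)
      have := Real.cosh_pos z.re
      have := le_max_left C 0
      linarith
    · have hz0 : z ≠ 0 := by
        intro h0; rw [h0] at h; simp at h; linarith
      rw [sinhc, if_neg hz0, norm_div]
      have h1 : ‖Complex.sinh z‖ / ‖z‖ ≤ ‖Complex.sinh z‖ :=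
        div_le_self (norm_nonneg _) h.le
      have h2 := norm_sinh_le z
      have := le_max_right C 0
      linarith
  refine ⟨Real.sqrt (C1 + 1), Real.sqrt_pos.2 (by positivity), ?_⟩
  intro z
  have h12 : ((1 : ℂ) / 2) = (((1 : ℝ) / 2 : ℝ) : ℂ) := by norm_num
  have hnorm : ‖Gfun z‖ = ‖sinhc z‖ ^ ((1 : ℝ) / 2) * ‖Complex.cosh z‖ := by
    rw [Gfun]
    simp only [norm_mul, h12, Complex.norm_cpow_real]
  rw [hnorm]
  have hc1 : (0 : ℝ) ≤ C1 := le_max_right C 0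
  have hcosh1 : 1 ≤ Real.cosh z.re := Real.one_le_cosh z.re
  have step1 : ‖sinhc z‖ ^ ((1 : ℝ) / 2) ≤ (C1 + 1) ^ ((1:ℝ)/2) * Real.cosh z.re ^ ((1:ℝ)/2) := by
    rw [← Real.mul_rpow (by positivity) (by linarith)]
    apply Real.rpow_le_rpow (norm_nonneg _) ?_ (by norm_num)
    calc ‖sinhc z‖ ≤ C1 + Real.cosh z.re := habs z
      _ ≤ (C1 + 1) * Real.cosh z.re := by nlinarith
  have step2 : ‖Complex.cosh z‖ ≤ Real.cosh z.re := by
    exact norm_cosh_le z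
  calc ‖sinhc z‖ ^ ((1 : ℝ) / 2) * ‖Complex.cosh z‖
      ≤ ((C1 + 1) ^ ((1:ℝ)/2) * Real.cosh z.re ^ ((1:ℝ)/2)) * Real.cosh z.re := by
        apply mul_le_mul step1 step2 (norm_nonneg _) (by positivity)
    _ = Real.sqrt (C1 + 1) * Real.cosh z.re ^ ((3 : ℝ) / 2) := by
        rw [Real.sqrt_eq_rpow]
        rw [mul_assoc]
        congr 1
        nth_rewrite 2 [← Real.rpow_one (Real.cosh z.re)]
        rw [← Real.rpow_add (Real.cosh_pos z.re)]
        norm_num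

def stripU : Set ℂ := {w : ℂ | |w.im| < Real.pi / 2 + 1 / 8}

lemma isOpen_stripU : IsOpen stripU :=
  isOpen_lt (continuous_abs.comp Complex.continuous_im) continuous_const

lemma convex_stripU : Convex ℝ stripU := by
  have : stripU = {w : ℂ | -(Real.pi / 2 + 1 / 8) < w.im} ∩
      {w : ℂ | w.im < Real.pi / 2 + 1 / 8} := by
    ext w; simp [stripU, abs_lt, and_comm]
  rw [this]
  exact (convex_halfSpace_im_gt _).inter (convex_halfSpace_im_lt _)

lemma exists_deriv_G_bound : ∃ M : ℝ, 0 < M ∧ ∀ z : ℂ, |z.im| < Real.pi / 2 + 1 / 8 →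
    ‖deriv Gfun z‖ ≤ M * Real.cosh z.re ^ ((3 : ℝ) / 2) := by
  obtain ⟨M, hM, hG⟩ := exists_G_bound
  refine ⟨8 * (M * Real.exp 1), by positivity, ?_⟩
  intro z hz
  have hr : (0 : ℝ) < 1 / 8 := by norm_num
  have hsub : Metric.closedBall z (1 / 8) ⊆ {ξ : ℂ | |ξ.im| < Real.pi / 2 + 1 / 4} := by
    intro ξ hξ
    rw [Metric.mem_closedBall, Complex.dist_eq] at hξ
    have h1 : |ξ.im - z.im| ≤ 1 / 8 := by
      calc |ξ.im - z.im| = |(ξ - z).im| := by rw [Complex.sub_im]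
        _ ≤ ‖ξ - z‖ := Complex.abs_im_le_norm _
        _ ≤ 1 / 8 := hξ
    have := abs_sub_abs_le_abs_sub ξ.im z.im
    simp only [Set.mem_setOf_eq]
    have h2 := abs_abs_sub_abs_le_abs_sub ξ.im z.im
    linarith
  have hd : DiffContOnCl ℂ Gfun (Metric.ball z (1 / 8)) := by
    apply DifferentiableOn.diffContOnCl
    rw [closure_ball z (by norm_num : (1 / 8 : ℝ) ≠ 0)]
    exact fun ξ hξ => (G_diffAt (hsub hξ)).differentiableWithinAt
  have hC : ∀ ξ ∈ Metric.sphere z (1 / 8), ‖Gfun ξ‖ ≤ M * Real.exp 1 * Real.cosh z.re ^ ((3:ℝ)/2) := by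
    intro ξ hξ
    rw [Metric.mem_sphere, Complex.dist_eq] at hξ
    have hre : |ξ.re - z.re| ≤ 1 / 8 := by
      calc |ξ.re - z.re| = |(ξ - z).re| := by rw [Complex.sub_re]
        _ ≤ ‖ξ - z‖ := Complex.abs_re_le_norm _
        _ = 1 / 8 := hξ
    have h1 : Real.cosh ξ.re ≤ Real.cosh z.re * Real.exp (1 / 8) := by
      have h2 : Real.cosh ξ.re = Real.cosh (z.re + (ξ.re - z.re)) := by ring_nf
      rw [h2]
      calc Real.cosh (z.re + (ξ.re - z.re)) ≤ Real.cosh z.re * Real.exp |ξ.re - z.re| :=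
            cosh_shift _ _
        _ ≤ Real.cosh z.re * Real.exp (1 / 8) := by
            have := Real.exp_le_exp.2 hre
            nlinarith [Real.cosh_pos z.re, Real.exp_pos |ξ.re - z.re|]
    calc ‖Gfun ξ‖ ≤ M * Real.cosh ξ.re ^ ((3 : ℝ) / 2) := hG ξ
      _ ≤ M * (Real.cosh z.re * Real.exp (1 / 8)) ^ ((3 : ℝ) / 2) := by
          apply mul_le_mul_of_nonneg_left ?_ hM.le
          exact Real.rpow_le_rpow (Real.cosh_pos _).le h1 (by norm_num)
      _ = M * (Real.cosh z.re ^ ((3:ℝ)/2) * Real.exp (1/8) ^ ((3:ℝ)/2)) := by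
          rw [Real.mul_rpow (Real.cosh_pos _).le (Real.exp_pos _).le]
      _ ≤ M * Real.exp 1 * Real.cosh z.re ^ ((3:ℝ)/2) := by
          have h3 : Real.exp (1/8) ^ ((3:ℝ)/2) = Real.exp (3/16) := by
            rw [← Real.exp_mul]; norm_num
          rw [h3]
          have h4 : Real.exp (3/16) ≤ Real.exp 1 := Real.exp_le_exp.2 (by norm_num)
          have h5 : (0:ℝ) ≤ Real.cosh z.re ^ ((3:ℝ)/2) := by positivity
          have h6 : Real.cosh z.re ^ ((3:ℝ)/2) * Real.exp (3/16) ≤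
              Real.cosh z.re ^ ((3:ℝ)/2) * Real.exp 1 := mul_le_mul_of_nonneg_left h4 h5
          calc M * (Real.cosh z.re ^ ((3:ℝ)/2) * Real.exp (3/16))
              ≤ M * (Real.cosh z.re ^ ((3:ℝ)/2) * Real.exp 1) :=
                mul_le_mul_of_nonneg_left h6 hM.le
            _ = M * Real.exp 1 * Real.cosh z.re ^ ((3:ℝ)/2) := by ring
  have hmain := Complex.norm_deriv_le_of_forall_mem_sphere_norm_le hr hd hC
  calc ‖deriv Gfun z‖ ≤ M * Real.exp 1 * Real.cosh z.re ^ ((3:ℝ)/2) / (1/8) := hmain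
    _ = 8 * (M * Real.exp 1) * Real.cosh z.re ^ ((3:ℝ)/2) := by ring

/-- the weight -/
def cw (n : ℕ) (l : ℝ) : ℂ := Complex.cosh (l : ℂ) ^ (-(n : ℂ) - 3 / 2)

lemma cw_eq (n : ℕ) (l : ℝ) : cw n l = ((Real.cosh l ^ (-(n : ℝ) - 3 / 2) : ℝ) : ℂ) := by
  rw [cw, ← Complex.ofReal_cosh, Complex.ofReal_cpow (Real.cosh_pos l).le]
  congr 1
  push_cast
  ring

lemma norm_cw (n : ℕ) (l : ℝ) : ‖cw n l‖ = Real.cosh l ^ (-(n : ℝ) - 3 / 2) := by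
  rw [cw_eq, Complex.norm_real]
  exact abs_of_nonneg (Real.rpow_nonneg (Real.cosh_pos l).le _)

lemma continuous_cw (n : ℕ) : Continuous (cw n) := by
  have : (cw n) = fun l : ℝ => ((Real.cosh l ^ (-(n : ℝ) - 3 / 2) : ℝ) : ℂ) := by
    funext l; exact cw_eq n l
  rw [this]
  exact Complex.continuous_ofReal.comp
    (Real.continuous_cosh.rpow_const (fun l => Or.inl (Real.cosh_pos l).ne'))

lemma integrable_exp_neg_abs : Integrable (fun x : ℝ => Real.exp (-|x|)) := by
  have h1 : IntegrableOn (fun x : ℝ => Real.exp (-|x|)) (Ioi (0:ℝ)) := by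
    apply (exp_neg_integrableOn_Ioi 0 (by norm_num : (0:ℝ) < 1)).congr_fun ?_ measurableSet_Ioi
    intro x hx
    show Real.exp (-1 * x) = Real.exp (-|x|)
    rw [abs_of_pos hx]
    norm_num
  have h2 : IntegrableOn (fun x : ℝ => Real.exp (-|x|)) (Iic (0:ℝ)) := by
    rw [← Measure.map_neg_eq_self (volume : Measure ℝ)]
    have m : MeasurableEmbedding (fun x : ℝ => -x) :=
      (Homeomorph.neg ℝ).measurableEmbedding
    rw [m.integrableOn_map_iff]
    simp only [Function.comp_def, abs_neg, neg_preimage, neg_Iic, neg_zero]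
    exact Iff.mpr integrableOn_Ici_iff_integrableOn_Ioi h1
  have h3 := h2.union h1
  rwa [Iic_union_Ioi, integrableOn_univ] at h3

lemma integrable_bound (n : ℕ) (hn : 1 ≤ n) (B : ℝ) :
    Integrable (fun l : ℝ => B * (Real.cosh l ^ ((3:ℝ)/2) * Real.cosh l ^ (-(n : ℝ) - 3/2))) := by
  have hsimp : ∀ l : ℝ, Real.cosh l ^ ((3:ℝ)/2) * Real.cosh l ^ (-(n : ℝ) - 3/2) =
      Real.cosh l ^ (-(n : ℝ)) := by
    intro l
    rw [← Real.rpow_add (Real.cosh_pos l)]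
    norm_num
  simp only [hsimp]
  apply Integrable.mono' (integrable_exp_neg_abs.const_mul (|B| * 2))
  · apply Continuous.aestronglyMeasurable
    exact continuous_const.mul (Real.continuous_cosh.rpow_const
      (fun l => Or.inl (Real.cosh_pos l).ne'))
  · filter_upwards with l
    rw [Real.norm_eq_abs, abs_mul]
    have hc1 : Real.cosh l ^ (-(n : ℝ)) ≤ Real.cosh l ^ (-(1 : ℝ)) := by
      apply Real.rpow_le_rpow_of_exponent_le (Real.one_le_cosh l)
      have : (1:ℝ) ≤ (n:ℝ) := by exact_mod_cast hn
      linarith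
    have hc2 : Real.cosh l ^ (-(1:ℝ)) = (Real.cosh l)⁻¹ := Real.rpow_neg_one _
    have hc3 : (Real.cosh l)⁻¹ ≤ 2 * Real.exp (-|l|) := by
      have he : Real.exp |l| / 2 ≤ Real.cosh l := by
        rw [← Real.cosh_abs, Real.cosh_eq]
        have := Real.exp_pos (-|l|)
        linarith
      have hpos : (0:ℝ) < Real.exp |l| / 2 := by positivity
      calc (Real.cosh l)⁻¹ ≤ (Real.exp |l| / 2)⁻¹ := by
            apply inv_anti₀ hpos he
        _ = 2 * Real.exp (-|l|) := by
            rw [Real.exp_neg]; field_simp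
    have habs : |Real.cosh l ^ (-(n:ℝ))| = Real.cosh l ^ (-(n:ℝ)) :=
      abs_of_nonneg (Real.rpow_nonneg (Real.cosh_pos l).le _)
    rw [habs]
    calc |B| * Real.cosh l ^ (-(n:ℝ)) ≤ |B| * (2 * Real.exp (-|l|)) := by
          apply mul_le_mul_of_nonneg_left ?_ (abs_nonneg B)
          calc Real.cosh l ^ (-(n:ℝ)) ≤ Real.cosh l ^ (-(1:ℝ)) := hc1
            _ = (Real.cosh l)⁻¹ := hc2
            _ ≤ 2 * Real.exp (-|l|) := hc3
      _ = |B| * 2 * Real.exp (-|l|) := by ring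

lemma integrable_F (n : ℕ) (hn : 1 ≤ n) {w : ℂ} (hw : w ∈ stripU) :
    Integrable (fun l : ℝ => Gfun ((l : ℂ) + w) * cw n l) := by
  have hcont : Continuous (fun l : ℝ => Gfun ((l : ℂ) + w)) := by
    rw [continuous_iff_continuousAt]
    intro l
    have him : |((l : ℂ) + w).im| < Real.pi / 2 + 1 / 4 := by
      simp only [Complex.add_im, Complex.ofReal_im, zero_add]
      have : |w.im| < Real.pi / 2 + 1 / 8 := hw
      linarith
    exact ContinuousAt.comp (x := l) (G_diffAt him).continuousAt
      ((Complex.continuous_ofReal.add continuous_const).continuousAt)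
  obtain ⟨M, hM, hG⟩ := exists_G_bound
  apply Integrable.mono' (integrable_bound n hn (M * Real.exp ((3 / 2) * |w.re|)))
  · exact (hcont.mul (continuous_cw n)).aestronglyMeasurable
  · filter_upwards with l
    rw [norm_mul, norm_cw]
    have h1 : ‖Gfun ((l : ℂ) + w)‖ ≤ M * Real.cosh (l + w.re) ^ ((3 : ℝ) / 2) := by
      have := hG ((l : ℂ) + w)
      simpa [Complex.add_re, Complex.ofReal_re] using this
    have h2 : Real.cosh (l + w.re) ^ ((3 : ℝ) / 2) ≤
        Real.cosh l ^ ((3 : ℝ) / 2) * Real.exp ((3 / 2) * |w.re|) := by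
      calc Real.cosh (l + w.re) ^ ((3 : ℝ) / 2)
          ≤ (Real.cosh l * Real.exp |w.re|) ^ ((3 : ℝ) / 2) :=
            Real.rpow_le_rpow (Real.cosh_pos _).le (cosh_shift l w.re) (by norm_num)
        _ = Real.cosh l ^ ((3 : ℝ) / 2) * Real.exp |w.re| ^ ((3 : ℝ) / 2) :=
            Real.mul_rpow (Real.cosh_pos _).le (Real.exp_pos _).le
        _ = Real.cosh l ^ ((3 : ℝ) / 2) * Real.exp ((3 / 2) * |w.re|) := by
            rw [← Real.exp_mul]; ring_nf
    calc ‖Gfun ((l : ℂ) + w)‖ * Real.cosh l ^ (-(n : ℝ) - 3 / 2)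
        ≤ (M * (Real.cosh l ^ ((3 : ℝ) / 2) * Real.exp ((3 / 2) * |w.re|))) *
            Real.cosh l ^ (-(n : ℝ) - 3 / 2) := by
          apply mul_le_mul_of_nonneg_right ?_ (Real.rpow_nonneg (Real.cosh_pos l).le _)
          calc ‖Gfun ((l : ℂ) + w)‖ ≤ M * Real.cosh (l + w.re) ^ ((3 : ℝ) / 2) := h1
            _ ≤ M * (Real.cosh l ^ ((3 : ℝ) / 2) * Real.exp ((3 / 2) * |w.re|)) :=
                mul_le_mul_of_nonneg_left h2 hM.le
      _ = M * Real.exp ((3 / 2) * |w.re|) *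
            (Real.cosh l ^ ((3 : ℝ) / 2) * Real.cosh l ^ (-(n : ℝ) - 3 / 2)) := by ring

lemma deriv_G_continuousAt {z : ℂ} (hz : |z.im| < Real.pi / 2 + 1 / 4) :
    ContinuousAt (deriv Gfun) z := by
  have hopen : IsOpen {ξ : ℂ | |ξ.im| < Real.pi / 2 + 1 / 4} :=
    isOpen_lt (continuous_abs.comp Complex.continuous_im) continuous_const
  have hdiff : DifferentiableOn ℂ Gfun {ξ : ℂ | |ξ.im| < Real.pi / 2 + 1 / 4} :=
    fun ξ hξ => (G_diffAt hξ).differentiableWithinAt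
  have hana : AnalyticOnNhd ℂ Gfun {ξ : ℂ | |ξ.im| < Real.pi / 2 + 1 / 4} :=
    hdiff.analyticOnNhd hopen
  exact (hana.deriv z hz).continuousAt

lemma An_hasDerivAt (n : ℕ) (hn : 1 ≤ n) {w₀ : ℂ} (hw₀ : w₀ ∈ stripU) :
    HasDerivAt (An n) (∫ l : ℝ, deriv Gfun ((l : ℂ) + w₀) * cw n l) w₀ := by
  obtain ⟨M, hM, hdG⟩ := exists_deriv_G_bound
  obtain ⟨ε₀, hε₀, hball₀⟩ := Metric.isOpen_iff.1 isOpen_stripU w₀ hw₀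
  set ε : ℝ := min ε₀ 1 with hε
  have hεpos : 0 < ε := lt_min hε₀ one_pos
  have hball : Metric.ball w₀ ε ⊆ stripU :=
    (Metric.ball_subset_ball (min_le_left _ _)).trans hball₀
  have key := hasDerivAt_integral_of_dominated_loc_of_deriv_le (μ := (volume : Measure ℝ))
    (F := fun (w : ℂ) (l : ℝ) => Gfun ((l : ℂ) + w) * cw n l)
    (F' := fun (w : ℂ) (l : ℝ) => deriv Gfun ((l : ℂ) + w) * cw n l)
    (x₀ := w₀)
    (bound := fun l : ℝ => (M * Real.exp ((3 / 2) * (|w₀.re| + 1))) *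
      (Real.cosh l ^ ((3 : ℝ) / 2) * Real.cosh l ^ (-(n : ℝ) - 3 / 2)))
    (s := Metric.ball w₀ ε) (Metric.ball_mem_nhds w₀ hεpos)
    ?hFmeas ?hFint ?hF'meas ?hbound ?hbi ?hdiff
  case hFmeas =>
    filter_upwards [Metric.ball_mem_nhds w₀ hεpos] with w hw
    exact (integrable_F n hn (hball hw)).aestronglyMeasurable
  case hFint => exact integrable_F n hn hw₀
  case hF'meas =>
    apply Continuous.aestronglyMeasurable
    have hc : Continuous (fun l : ℝ => deriv Gfun ((l : ℂ) + w₀)) := by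
      rw [continuous_iff_continuousAt]
      intro l
      have him : |((l : ℂ) + w₀).im| < Real.pi / 2 + 1 / 4 := by
        simp only [Complex.add_im, Complex.ofReal_im, zero_add]
        have : |w₀.im| < Real.pi / 2 + 1 / 8 := hw₀
        linarith
      exact ContinuousAt.comp (x := l) (deriv_G_continuousAt him)
        ((Complex.continuous_ofReal.add continuous_const).continuousAt)
    exact hc.mul (continuous_cw n)
  case hbound =>
    filter_upwards with l
    intro w hw
    have hwU : w ∈ stripU := hball hw
    rw [norm_mul, norm_cw]
    have him : |((l : ℂ) + w).im| < Real.pi / 2 + 1 / 8 := by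
      simp only [Complex.add_im, Complex.ofReal_im, zero_add]
      exact hwU
    have h1 : ‖deriv Gfun ((l : ℂ) + w)‖ ≤ M * Real.cosh (l + w.re) ^ ((3 : ℝ) / 2) := by
      have := hdG ((l : ℂ) + w) him
      simpa [Complex.add_re, Complex.ofReal_re] using this
    have hwre : |w.re| ≤ |w₀.re| + 1 := by
      have hd : |w.re - w₀.re| ≤ 1 := by
        calc |w.re - w₀.re| = |(w - w₀).re| := by rw [Complex.sub_re]
          _ ≤ ‖w - w₀‖ := Complex.abs_re_le_norm _
          _ ≤ 1 := by
              have := Metric.mem_ball.1 hw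
              rw [Complex.dist_eq] at this
              have h2 : ε ≤ 1 := min_le_right _ _
              linarith
      have := abs_sub_abs_le_abs_sub w.re w₀.re
      linarith [abs_abs_sub_abs_le_abs_sub w.re w₀.re]
    have h2 : Real.cosh (l + w.re) ^ ((3 : ℝ) / 2) ≤
        Real.cosh l ^ ((3 : ℝ) / 2) * Real.exp ((3 / 2) * (|w₀.re| + 1)) := by
      calc Real.cosh (l + w.re) ^ ((3 : ℝ) / 2)
          ≤ (Real.cosh l * Real.exp |w.re|) ^ ((3 : ℝ) / 2) :=
            Real.rpow_le_rpow (Real.cosh_pos _).le (cosh_shift l w.re) (by norm_num)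
        _ = Real.cosh l ^ ((3 : ℝ) / 2) * Real.exp |w.re| ^ ((3 : ℝ) / 2) :=
            Real.mul_rpow (Real.cosh_pos _).le (Real.exp_pos _).le
        _ = Real.cosh l ^ ((3 : ℝ) / 2) * Real.exp ((3 / 2) * |w.re|) := by
            rw [← Real.exp_mul]; ring_nf
        _ ≤ Real.cosh l ^ ((3 : ℝ) / 2) * Real.exp ((3 / 2) * (|w₀.re| + 1)) := by
            apply mul_le_mul_of_nonneg_left ?_ (Real.rpow_nonneg (Real.cosh_pos l).le _)
            exact Real.exp_le_exp.2 (by linarith)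
    calc ‖deriv Gfun ((l : ℂ) + w)‖ * Real.cosh l ^ (-(n : ℝ) - 3 / 2)
        ≤ (M * (Real.cosh l ^ ((3 : ℝ) / 2) * Real.exp ((3 / 2) * (|w₀.re| + 1)))) *
            Real.cosh l ^ (-(n : ℝ) - 3 / 2) := by
          apply mul_le_mul_of_nonneg_right ?_ (Real.rpow_nonneg (Real.cosh_pos l).le _)
          calc ‖deriv Gfun ((l : ℂ) + w)‖ ≤ M * Real.cosh (l + w.re) ^ ((3 : ℝ) / 2) := h1
            _ ≤ M * (Real.cosh l ^ ((3 : ℝ) / 2) * Real.exp ((3 / 2) * (|w₀.re| + 1))) :=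
                mul_le_mul_of_nonneg_left h2 hM.le
      _ = (M * Real.exp ((3 / 2) * (|w₀.re| + 1))) *
            (Real.cosh l ^ ((3 : ℝ) / 2) * Real.cosh l ^ (-(n : ℝ) - 3 / 2)) := by ring
  case hbi => exact integrable_bound n hn _
  case hdiff =>
    filter_upwards with l
    intro w hw
    have hwU : w ∈ stripU := hball hw
    have him : |((l : ℂ) + w).im| < Real.pi / 2 + 1 / 4 := by
      simp only [Complex.add_im, Complex.ofReal_im, zero_add]
      have : |w.im| < Real.pi / 2 + 1 / 8 := hwU
      linarith
    have h1 : HasDerivAt Gfun (deriv Gfun ((l : ℂ) + w)) ((l : ℂ) + w) :=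
      (G_diffAt him).hasDerivAt
    have h2 : HasDerivAt (fun w : ℂ => (l : ℂ) + w) 1 w := (hasDerivAt_id w).const_add _
    have h3 := h1.comp w h2
    simp only [mul_one] at h3
    exact h3.mul_const (cw n l)
  have hAn : An n = fun w : ℂ => ∫ l : ℝ, Gfun ((l : ℂ) + w) * cw n l := rfl
  rw [hAn]
  exact key.2

lemma An_analyticOnNhd (n : ℕ) (hn : 1 ≤ n) : AnalyticOnNhd ℂ (An n) stripU :=
  DifferentiableOn.analyticOnNhd
    (fun w hw => ((An_hasDerivAt n hn hw).differentiableAt).differentiableWithinAt)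
    isOpen_stripU

lemma shc_pos (l : ℝ) : 0 < shc l := by
  rw [shc]
  split_ifs with h
  · norm_num
  · have h2 : Real.sinh l / l = l * Real.sinh l / (l * l) :=
      (mul_div_mul_left _ _ h).symm
    rw [h2]
    exact div_pos (self_mul_sinh_pos h) (mul_self_pos.2 h)

lemma sinhc_ofReal (l : ℝ) : sinhc (l : ℂ) = ((shc l : ℝ) : ℂ) := by
  rw [sinhc, shc]
  by_cases h : l = 0
  · simp [h]
  · rw [if_neg (by exact_mod_cast h), if_neg h]
    push_cast
    rfl

lemma zero_mem_stripU : (0 : ℂ) ∈ stripU := by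
  show |(0 : ℂ).im| < Real.pi / 2 + 1 / 8
  rw [Complex.zero_im, abs_zero]
  positivity

lemma An_zero_ne_zero (n : ℕ) (hn : 1 ≤ n) : An n 0 ≠ 0 := by
  set g : ℝ → ℝ := fun l =>
    shc l ^ ((1 : ℝ) / 2) * Real.cosh l * Real.cosh l ^ (-(n : ℝ) - 3 / 2) with hg
  have hFg : ∀ l : ℝ, Gfun ((l : ℂ) + 0) * cw n l = ((g l : ℝ) : ℂ) := by
    intro l
    rw [add_zero, Gfun, cw_eq, sinhc_ofReal]
    have h1 : ((shc l : ℝ) : ℂ) ^ ((1 : ℂ) / 2) = ((shc l ^ ((1 : ℝ) / 2) : ℝ) : ℂ) := by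
      rw [Complex.ofReal_cpow (shc_pos l).le]
      norm_num
    rw [h1, ← Complex.ofReal_cosh, hg]
    simp only [Complex.ofReal_mul]
  have hint : Integrable (fun l : ℝ => Gfun ((l : ℂ) + 0) * cw n l) :=
    integrable_F n hn zero_mem_stripU
  have hAn0 : An n 0 = ((∫ l : ℝ, g l : ℝ) : ℂ) := by
    have : An n 0 = ∫ l : ℝ, Gfun ((l : ℂ) + 0) * cw n l := rfl
    rw [this]
    simp_rw [hFg]
    exact integral_ofReal
  have hgint : Integrable g := by
    have h1 : Integrable (fun l : ℝ => ((g l : ℝ) : ℂ)) := by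
      apply hint.congr
      filter_upwards with l
      exact hFg l
    have h2 := h1.re
    simpa using h2
  have hgpos : ∀ l : ℝ, 0 < g l := by
    intro l
    have h1 := shc_pos l
    have h2 := Real.cosh_pos l
    positivity
  have hpos : 0 < ∫ l : ℝ, g l := by
    rw [integral_pos_iff_support_of_nonneg (fun l => (hgpos l).le) hgint]
    have : Function.support g = Set.univ := by
      ext l; simp [Function.mem_support, (hgpos l).ne']
    rw [this]
    simp [Real.volume_univ]
  rw [hAn0]
  exact_mod_cast hpos.ne'

end Aux14

theorem stmt14 (n : ℕ) (hn : 1 ≤ n) :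
    {φ : ℝ | φ ∈ Set.Icc (-(Real.pi / 2)) (Real.pi / 2) ∧
      An n (Complex.I * φ) = 0}.Finite := by
  by_contra hinf
  set S := {φ : ℝ | φ ∈ Set.Icc (-(Real.pi / 2)) (Real.pi / 2) ∧
      An n (Complex.I * φ) = 0} with hS
  have hSsub : S ⊆ Set.Icc (-(Real.pi / 2)) (Real.pi / 2) := fun φ hφ => hφ.1
  obtain ⟨x, hxI, hacc⟩ : ∃ x ∈ Set.Icc (-(Real.pi / 2)) (Real.pi / 2), AccPt x (𝓟 S) := by
    by_contra hno
    push_neg at hno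
    have hU : ∀ x ∈ Set.Icc (-(Real.pi / 2)) (Real.pi / 2),
        ∃ U ∈ 𝓝 x, ∀ y ∈ U ∩ S, y = x := by
      intro x hx
      have h1 := hno x hx
      rw [accPt_iff_nhds] at h1
      push_neg at h1
      exact h1
    choose! U hU1 hU2 using hU
    obtain ⟨t, htmem, htcov⟩ := isCompact_Icc.elim_nhds_subcover U hU1
    apply hinf
    apply Set.Finite.subset t.finite_toSet
    intro y hy
    have hyI := hSsub hy
    have h2 := htcov hyI
    rw [Set.mem_iUnion₂] at h2
    obtain ⟨x, hxt, hyU⟩ := h2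
    have h3 := hU2 x (htmem x hxt) y ⟨hyU, hy⟩
    rw [h3]
    exact hxt
  have hfreq : ∃ᶠ φ : ℝ in 𝓝[≠] x, An n (Complex.I * (φ : ℂ)) = 0 := by
    have h1 := (accPt_iff_frequently (x := x) (C := S)).1 hacc
    rw [frequently_nhdsWithin_iff]
    apply h1.mono
    rintro y ⟨hyx, hyS⟩
    exact ⟨hyS.2, by simpa using hyx⟩
  have hmap : Tendsto (fun φ : ℝ => Complex.I * (φ : ℂ)) (𝓝[≠] x)
      (𝓝[≠] (Complex.I * (x : ℂ))) := by
    rw [nhdsWithin, nhdsWithin]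
    apply Tendsto.inf
    · exact (continuous_const.mul Complex.continuous_ofReal).continuousAt
    · rw [tendsto_principal_principal]
      intro φ hφ
      simp only [Set.mem_compl_iff, Set.mem_singleton_iff] at hφ ⊢
      intro hEq
      apply hφ
      have h4 := mul_left_cancel₀ Complex.I_ne_zero hEq
      exact_mod_cast h4
  have hfreq2 : ∃ᶠ z in 𝓝[≠] (Complex.I * (x : ℂ)), An n z = 0 := hmap.frequently hfreq
  have hxU : Complex.I * (x : ℂ) ∈ Aux14.stripU := by
    show |(Complex.I * (x : ℂ)).im| < Real.pi / 2 + 1 / 8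
    have him : (Complex.I * (x : ℂ)).im = x := by simp
    rw [him]
    have h1 : |x| ≤ Real.pi / 2 := abs_le.2 ⟨hxI.1, hxI.2⟩
    linarith
  have heq := (Aux14.An_analyticOnNhd n hn).eqOn_zero_of_preconnected_of_frequently_eq_zero
    Aux14.convex_stripU.isPreconnected hxU hfreq2
  exact Aux14.An_zero_ne_zero n hn (by simpa using heq Aux14.zero_mem_stripU)
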